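/- Let ξ, X, η be independent random variables, each exponentially distributed with rate 1. Then for every integer k ≥ 0, the k-th moment E[((ξ + X)·e^{−η})^k] equals k! (which is the k-th moment of the Exp(1) distribution). -/

import Mathlib

open MeasureTheory ProbabilityTheory Set Real

lemma expMeasure_one_eq :
    expMeasure 1 = MeasureTheory.volume.withDensity
      (fun x => ((gammaPDFReal 1 1 x).toNNReal : ENNReal)) := rfl

lemma integral_expMeasure_one (f : ℝ → ℝ) :
    ∫ x, f x ∂(expMeasure 1) = ∫ x in Set.Ioi (0:ℝ), f x * Real.exp (-x) := by
  rw [expMeasure_one_eq,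
    integral_withDensity_eq_integral_smul ((measurable_gammaPDFReal 1 1).real_toNNReal) f]
  have h1 : (fun x => (gammaPDFReal 1 1 x).toNNReal • f x)
      = fun x => gammaPDFReal 1 1 x * f x := by
    funext x
    rw [NNReal.smul_def, Real.coe_toNNReal _ (gammaPDFReal_nonneg zero_lt_one zero_lt_one x), smul_eq_mul]
  rw [h1]
  rw [← setIntegral_eq_integral_of_forall_compl_eq_zero
    (s := Set.Ici (0:ℝ)) (fun x hx => by
      simp only [Set.mem_Ici, not_le] at hx
      simp [gammaPDFReal, not_le.mpr hx])]
  rw [MeasureTheory.integral_Ici_eq_integral_Ioi]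
  refine setIntegral_congr_fun measurableSet_Ioi (fun x hx => ?_)
  simp only [Set.mem_Ioi] at hx
  simp [gammaPDFReal, hx.le, Real.Gamma_one, mul_comm]

lemma moment_expMeasure (n : ℕ) :
    ∫ x, x ^ n ∂(expMeasure 1) = (Nat.factorial n : ℝ) := by
  rw [integral_expMeasure_one]
  have h := Real.Gamma_eq_integral (s := (n : ℝ) + 1) (by positivity)
  rw [Real.Gamma_nat_eq_factorial n] at h
  rw [h]
  refine setIntegral_congr_fun measurableSet_Ioi (fun x hx => ?_)
  simp only [Set.mem_Ioi] at hx
  rw [add_sub_cancel_right, Real.rpow_natCast, mul_comm]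

lemma exp_pow_moment (k : ℕ) :
    ∫ x, Real.exp (-x) ^ k ∂(expMeasure 1) = 1 / ((k : ℝ) + 1) := by
  rw [integral_expMeasure_one]
  have h1 : ∀ x : ℝ, Real.exp (-x) ^ k * Real.exp (-x)
      = Real.exp (-(((k : ℝ) + 1) * x)) := by
    intro x
    rw [← Real.exp_nat_mul, ← Real.exp_add]
    ring_nf
  simp_rw [h1]
  have h2 := integral_comp_mul_left_Ioi (fun x => Real.exp (-x)) 0
    (b := (k : ℝ) + 1) (by positivity)
  simp only [mul_zero] at h2
  rw [h2, integral_exp_neg_Ioi_zero, smul_eq_mul, mul_one, one_div]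

lemma integrable_expMeasure (f : ℝ → ℝ) (_hm : Measurable f)
    (hi : IntegrableOn (fun x => f x * Real.exp (-x)) (Set.Ioi 0)) :
    Integrable f (expMeasure 1) := by
  rw [expMeasure_one_eq, integrable_withDensity_iff_integrable_smul
    ((measurable_gammaPDFReal 1 1).real_toNNReal)]
  have hae : (fun x => (gammaPDFReal 1 1 x).toNNReal • f x)
      =ᵐ[MeasureTheory.volume] (Set.Ioi 0).indicator (fun x => f x * Real.exp (-x)) := by
    filter_upwards [compl_mem_ae_iff.mpr (measure_singleton (0:ℝ))] with x hx
    simp only [Set.mem_compl_iff, Set.mem_singleton_iff] at hx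
    rcases lt_trichotomy x 0 with h | h | h
    · simp [Set.indicator_of_notMem, Set.mem_Ioi, not_lt.mpr h.le, gammaPDFReal, not_le.mpr h]
    · exact absurd h hx
    · rw [Set.indicator_of_mem (Set.mem_Ioi.mpr h), NNReal.smul_def,
        Real.coe_toNNReal _ (gammaPDFReal_nonneg zero_lt_one zero_lt_one x), smul_eq_mul]
      simp [gammaPDFReal, h.le, Real.Gamma_one, mul_comm]
  rw [integrable_congr hae]
  rwa [integrable_indicator_iff measurableSet_Ioi]

lemma integrable_pow_expMeasure (n : ℕ) :
    Integrable (fun x : ℝ => x ^ n) (expMeasure 1) := by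
  refine integrable_expMeasure _ ((measurable_id.pow_const n)) ?_
  have h := Real.GammaIntegral_convergent (s := (n : ℝ) + 1) (by positivity)
  refine h.congr_fun (fun x hx => ?_) measurableSet_Ioi
  simp only [Set.mem_Ioi] at hx
  rw [add_sub_cancel_right]; beta_reduce; rw [Real.rpow_natCast, mul_comm]

lemma integrable_exp_pow_expMeasure (k : ℕ) :
    Integrable (fun x : ℝ => Real.exp (-x) ^ k) (expMeasure 1) := by
  refine integrable_expMeasure _ (by fun_prop) ?_
  have h1 : ∀ x : ℝ, Real.exp (-x) ^ k * Real.exp (-x)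
      = Real.exp (-(((k : ℝ) + 1)) * x) := by
    intro x
    rw [← Real.exp_nat_mul, ← Real.exp_add]
    ring_nf
  simp_rw [h1]
  exact exp_neg_integrableOn_Ioi 0 (by positivity)


/-- Moment computation (method of moments step in Proposition 4.3): if `ξ, X, η` are
independent `Exp(1)` random variables, then for every `k ≥ 0`,
`E[((ξ + X)·e^{-η})^k] = k!`. -/
theorem stmt_8 {Ω : Type*} [MeasurableSpace Ω] (P : Measure Ω) [IsProbabilityMeasure P]
    (ξ X η : Ω → ℝ) (hξ : Measurable ξ) (hX : Measurable X) (hη : Measurable η)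
    (hindep : iIndepFun ![ξ, X, η] P)
    (hξd : Measure.map ξ P = expMeasure 1)
    (hXd : Measure.map X P = expMeasure 1)
    (hηd : Measure.map η P = expMeasure 1) :
    ∀ k : ℕ, ∫ ω, ((ξ ω + X ω) * Real.exp (-η ω)) ^ k ∂P = (Nat.factorial k : ℝ) := by
  intro k
  have hmeas : ∀ i, Measurable (![ξ, X, η] i) := by
    intro i
    fin_cases i <;> simpa
  -- moments of ξ, X
  have Emom : ∀ (f : Ω → ℝ), Measurable f → Measure.map f P = expMeasure 1 →
      ∀ n : ℕ, ∫ ω, f ω ^ n ∂P = (Nat.factorial n : ℝ) := by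
    intro f hf hfd n
    have h : ∫ ω, f ω ^ n ∂P = ∫ x, x ^ n ∂(Measure.map f P) :=
      (integral_map hf.aemeasurable (measurable_id.pow_const n).aestronglyMeasurable).symm
    rw [h, hfd, moment_expMeasure]
  have Eint : ∀ (f : Ω → ℝ), Measurable f → Measure.map f P = expMeasure 1 →
      ∀ n : ℕ, Integrable (fun ω => f ω ^ n) P := by
    intro f hf hfd n
    have h : Integrable (fun x : ℝ => x ^ n) (Measure.map f P) := by
      rw [hfd]; exact integrable_pow_expMeasure n
    exact h.comp_aemeasurable hf.aemeasurable
  -- independence of ξ and X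
  have h01 : IndepFun ξ X P := by
    simpa using hindep.indepFun (show (0 : Fin 3) ≠ 1 by decide)
  -- independence of (ξ, X) and η
  have h2 : IndepFun (fun ω => (ξ ω, X ω)) η P := by
    simpa using hindep.indepFun_prodMk hmeas 0 1 2 (by decide) (by decide)
  -- independence of (ξ+X)^k and exp(-η)^k
  have h3 : IndepFun (fun ω => (ξ ω + X ω) ^ k) (fun ω => Real.exp (-η ω) ^ k) P :=
    h2.comp ((measurable_fst.add measurable_snd).pow_const k)
      ((measurable_neg.exp).pow_const k)
  have hsplit : ∫ ω, ((ξ ω + X ω) * Real.exp (-η ω)) ^ k ∂P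
      = (∫ ω, (ξ ω + X ω) ^ k ∂P) * ∫ ω, Real.exp (-η ω) ^ k ∂P := by
    simp_rw [mul_pow]
    exact h3.integral_fun_mul_eq_mul_integral ((hξ.add hX).pow_const k).aestronglyMeasurable
      ((hη.neg.exp.pow_const k)).aestronglyMeasurable
  rw [hsplit]
  -- compute E[exp(-η)^k]
  have hE2 : ∫ ω, Real.exp (-η ω) ^ k ∂P = 1 / ((k : ℝ) + 1) := by
    have h : ∫ ω, Real.exp (-η ω) ^ k ∂P
        = ∫ x, Real.exp (-x) ^ k ∂(Measure.map η P) :=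
      (integral_map hη.aemeasurable
        ((measurable_neg.exp).pow_const k).aestronglyMeasurable).symm
    rw [h, hηd, exp_pow_moment]
  -- compute E[(ξ+X)^k]
  have hE1 : ∫ ω, (ξ ω + X ω) ^ k ∂P = ((k + 1).factorial : ℝ) := by
    have hterm : ∀ i ∈ Finset.range (k + 1),
        Integrable (fun ω => ξ ω ^ i * X ω ^ (k - i) * (k.choose i : ℝ)) P := by
      intro i _
      exact ((h01.comp (measurable_id.pow_const i) (measurable_id.pow_const (k - i))).integrable_mul
        (Eint ξ hξ hξd i) (Eint X hX hXd (k - i))).mul_const _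
    calc ∫ ω, (ξ ω + X ω) ^ k ∂P
        = ∫ ω, ∑ i ∈ Finset.range (k + 1),
            ξ ω ^ i * X ω ^ (k - i) * (k.choose i : ℝ) ∂P := by
          simp_rw [add_pow]
      _ = ∑ i ∈ Finset.range (k + 1),
            ∫ ω, ξ ω ^ i * X ω ^ (k - i) * (k.choose i : ℝ) ∂P :=
          integral_finset_sum _ hterm
      _ = ∑ i ∈ Finset.range (k + 1),
            (i.factorial : ℝ) * ((k - i).factorial : ℝ) * (k.choose i : ℝ) := by
          refine Finset.sum_congr rfl (fun i _ => ?_)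
          have hmul : (∫ a, ξ a ^ i * X a ^ (k - i) ∂P)
              = (∫ a, ξ a ^ i ∂P) * ∫ a, X a ^ (k - i) ∂P :=
            (h01.comp (measurable_id.pow_const i)
              (measurable_id.pow_const (k - i))).integral_fun_mul_eq_mul_integral
              (hξ.pow_const i).aestronglyMeasurable (hX.pow_const (k - i)).aestronglyMeasurable
          rw [integral_mul_const, hmul, Emom ξ hξ hξd i, Emom X hX hXd (k - i)]
      _ = ∑ i ∈ Finset.range (k + 1), (k.factorial : ℝ) := by
          refine Finset.sum_congr rfl (fun i hi => ?_)
          rw [Finset.mem_range, Nat.lt_succ_iff] at hi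
          rw [← Nat.choose_mul_factorial_mul_factorial hi]
          push_cast
          ring
      _ = ((k + 1).factorial : ℝ) := by
          rw [Finset.sum_const, Finset.card_range, Nat.factorial_succ]
          push_cast
          ring
  rw [hE1, hE2, Nat.factorial_succ]
  have hk : ((k : ℝ) + 1) ≠ 0 := by positivity
  push_cast
  field_simp
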